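/- (Lemma A.3.) Assume (A1). Let 0 ≤ i ≤ n and let f be a bounded measurable function on X^{n+1} which depends only on the coordinates (x_i, …, x_n). For 0 ≤ k ≤ n and a fixed reference point x̂_{0:k} ∈ X^{k+1}, define Ψ_{k,n}[f](x_{0:k}) := L_k⋯L_{n−1} f(x_{0:k}) / L_k⋯L_{n−1}(x_{0:k}, X^{n+1}) − L_k⋯L_{n−1} f(x̂_{0:k}) / L_k⋯L_{n−1}(x̂_{0:k}, X^{n+1}). Then sup_{x_{0:k} ∈ X^{k+1}} |Ψ_{k,n}[f](x_{0:k})| ≤ 2 ρ^{max(i−k, 0)} ‖f‖_∞, where ‖f‖_∞ is the supremum norm and ρ = 1 − σ₋/σ₊. -/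

import Mathlib

/- Lemma A.3 of Olsson, Cappé, Douc, Moulines: under (A1), for a bounded
measurable function `f` on `X^{n+1}` depending only on the coordinates
`(x_i, …, x_n)`, the function
`Ψ_{k,n}[f](x_{0:k}) = L_k⋯L_{n-1}f(x_{0:k})/L_k⋯L_{n-1}(x_{0:k},X^{n+1})
  − L_k⋯L_{n-1}f(x̂_{0:k})/L_k⋯L_{n-1}(x̂_{0:k},X^{n+1})`
satisfies `‖Ψ_{k,n}[f]‖_∞ ≤ 2 ρ^{max(i−k,0)} ‖f‖_∞`. -/

open MeasureTheory

noncomputable section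

variable {X : Type*} [MeasurableSpace X] {Y : Type*}

/-- `LF μ q g ys n m f x` is the iterated unnormalized smoothing operator
`(L_{n-m} ⋯ L_{n-1} f)(x_{0:n-m})`, paths being represented as elements of `ℕ → X`. -/
def LF (μ : Measure X) (q : X → X → ℝ) (g : X → Y → ℝ) (ys : ℕ → Y) (n : ℕ) :
    ℕ → ((ℕ → X) → ℝ) → (ℕ → X) → ℝ
  | 0, f, x => f x
  | m + 1, f, x =>
      ∫ x', g x' (ys (n - m)) * q (x (n - m - 1)) x' *
        LF μ q g ys n m f (Function.update x (n - m) x') ∂μ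

/-- `Psi μ q g ys n k xhat f = Ψ_{k,n}[f]`, with reference point `xhat`. -/
def Psi (μ : Measure X) (q : X → X → ℝ) (g : X → Y → ℝ) (ys : ℕ → Y) (n k : ℕ)
    (xhat : ℕ → X) (f : (ℕ → X) → ℝ) (x : ℕ → X) : ℝ :=
  LF μ q g ys n (n - k) f x / LF μ q g ys n (n - k) (fun _ => 1) x -
    LF μ q g ys n (n - k) f xhat / LF μ q g ys n (n - k) (fun _ => 1) xhat

lemma intg (μ : Measure X) [IsProbabilityMeasure μ] {h : X → ℝ} (hm : Measurable h)
    {C : ℝ} (hC : ∀ u, |h u| ≤ C) : Integrable h μ :=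
  (integrable_const C).mono' hm.aestronglyMeasurable
    (ae_of_all _ fun u => by simpa [Real.norm_eq_abs] using hC u)

lemma abs_integral_le_of_le (μ : Measure X) [IsProbabilityMeasure μ] {F G : X → ℝ}
    (hF : Integrable F μ) (hG : Integrable G μ) (hle : ∀ u, |F u| ≤ G u) :
    |∫ u, F u ∂μ| ≤ ∫ u, G u ∂μ := by
  calc |∫ u, F u ∂μ| ≤ ∫ u, |F u| ∂μ := by
        simpa [Real.norm_eq_abs] using norm_integral_le_integral_norm (μ := μ) F
    _ ≤ ∫ u, G u ∂μ := integral_mono hF.abs hG hle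

lemma meas_update (j : ℕ) :
    Measurable fun p : (ℕ → X) × X => Function.update p.1 j p.2 := by
  apply measurable_pi_iff.2
  intro l
  by_cases hl : l = j
  · subst hl; simpa [Function.update_apply] using (measurable_snd : Measurable fun p : (ℕ → X) × X => p.2)
  · simpa [Function.update_apply, hl, Function.comp_def] using (measurable_pi_apply l).comp
      (measurable_fst : Measurable fun p : (ℕ → X) × X => p.1)

section Helpers
variable (μ : Measure X) [IsProbabilityMeasure μ] [Nonempty X]
  (q : X → X → ℝ) (g : X → Y → ℝ) (ys : ℕ → Y) (n : ℕ)
  (Cq : ℝ) (Cg : ℕ → ℝ)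
  (hq_meas : Measurable (Function.uncurry q))
  (hq_nonneg : ∀ a b, 0 ≤ q a b)
  (hCq : ∀ a b, |q a b| ≤ Cq)
  (hg_meas : ∀ yv, Measurable fun x => g x yv)
  (hg_nonneg : ∀ x yv, 0 ≤ g x yv)
  (hCg : ∀ j u, |g u (ys j)| ≤ Cg j)

include hq_meas hCq hg_meas hCg in
lemma LF_meas_bdd (m : ℕ) (f : (ℕ → X) → ℝ) (hf : Measurable f) (Cf : ℝ)
    (hCf : ∀ x, |f x| ≤ Cf) :
    Measurable (LF μ q g ys n m f) ∧ ∃ B, ∀ x, |LF μ q g ys n m f x| ≤ B := by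
  induction m with
  | zero => exact ⟨hf, Cf, hCf⟩
  | succ m ih =>
    obtain ⟨ihm, B, hB⟩ := ih
    have u0 : X := Classical.arbitrary X
    have hCq0 : 0 ≤ Cq := (abs_nonneg _).trans (hCq u0 u0)
    have hCg0 : 0 ≤ Cg (n - m) := (abs_nonneg _).trans (hCg (n - m) u0)
    have hB0 : 0 ≤ B := (abs_nonneg _).trans (hB fun _ => u0)
    have hjoint : Measurable fun p : (ℕ → X) × X =>
        g p.2 (ys (n - m)) * q (p.1 (n - m - 1)) p.2 *
          LF μ q g ys n m f (Function.update p.1 (n - m) p.2) := by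
      refine Measurable.mul (Measurable.mul ?_ ?_) ?_
      · exact (hg_meas _).comp measurable_snd
      · have h1 : Measurable fun p : (ℕ → X) × X => (p.1 (n - m - 1), p.2) :=
          Measurable.prodMk ((measurable_pi_apply _).comp measurable_fst) measurable_snd
        exact hq_meas.comp h1
      · exact ihm.comp (meas_update _)
    constructor
    · exact (hjoint.stronglyMeasurable.integral_prod_right').measurable
    · refine ⟨Cg (n - m) * Cq * B, fun x => ?_⟩
      have := norm_integral_le_of_norm_le_const (μ := μ)
        (f := fun x' => g x' (ys (n - m)) * q (x (n - m - 1)) x' *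
          LF μ q g ys n m f (Function.update x (n - m) x'))
        (C := Cg (n - m) * Cq * B)
        (ae_of_all _ fun x' => by
          rw [Real.norm_eq_abs, abs_mul, abs_mul]
          exact mul_le_mul (mul_le_mul (hCg _ _) (hCq _ _) (abs_nonneg _) hCg0)
            (hB _) (abs_nonneg _) (by positivity))
      simpa [LF, Real.norm_eq_abs] using this

omit [IsProbabilityMeasure μ] [Nonempty X] in
include hq_nonneg hg_nonneg in
lemma LF_nonneg (m : ℕ) (f : (ℕ → X) → ℝ) (hf : ∀ x, 0 ≤ f x) :
    ∀ x, 0 ≤ LF μ q g ys n m f x := by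
  induction m with
  | zero => exact hf
  | succ m ih =>
    intro x
    refine integral_nonneg fun x' => ?_
    exact mul_nonneg (mul_nonneg (hg_nonneg _ _) (hq_nonneg _ _)) (ih _)

omit [Nonempty X] in
include hq_meas hg_meas in
lemma inner_meas (x : ℕ → X) (j l : ℕ) {F : (ℕ → X) → ℝ} (hF : Measurable F) :
    Measurable fun x' : X => g x' (ys j) * q (x l) x' * F (Function.update x j x') := by
  refine Measurable.mul (Measurable.mul (hg_meas _) ?_) (hF.comp (measurable_update x))
  exact hq_meas.of_uncurry_left

include hq_meas hq_nonneg hCq hg_meas hg_nonneg hCg in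
lemma LF_abs_le (m : ℕ) (f : (ℕ → X) → ℝ) (hf : Measurable f) (Cf : ℝ)
    (hCf : ∀ x, |f x| ≤ Cf) :
    ∀ x, |LF μ q g ys n m f x| ≤ Cf * LF μ q g ys n m (fun _ => 1) x := by
  induction m with
  | zero => intro x; simpa [LF] using hCf x
  | succ m ih =>
    intro x
    obtain ⟨hmf, B, hB⟩ := LF_meas_bdd μ q g ys n Cq Cg hq_meas hCq hg_meas hCg m f hf Cf hCf
    obtain ⟨hm1, B1, hB1⟩ := LF_meas_bdd μ q g ys n Cq Cg hq_meas hCq hg_meas hCg m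
      (fun _ => 1) measurable_const 1 (fun _ => by norm_num)
    have u0 : X := Classical.arbitrary X
    have hCq0 : 0 ≤ Cq := (abs_nonneg _).trans (hCq u0 u0)
    have hCg0 : 0 ≤ Cg (n - m) := (abs_nonneg _).trans (hCg (n - m) u0)
    have hCf0 : 0 ≤ Cf := (abs_nonneg _).trans (hCf fun _ => u0)
    have hint1 : Integrable (fun x' => g x' (ys (n - m)) * q (x (n - m - 1)) x' *
        LF μ q g ys n m f (Function.update x (n - m) x')) μ :=
      intg μ (inner_meas q g ys hq_meas hg_meas x _ _ hmf)
        (C := Cg (n - m) * Cq * B) (fun x' => by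
          rw [abs_mul, abs_mul]
          exact mul_le_mul (mul_le_mul (hCg _ _) (hCq _ _) (abs_nonneg _) hCg0)
            (hB _) (abs_nonneg _) (by positivity))
    have hint2 : Integrable (fun x' => g x' (ys (n - m)) * q (x (n - m - 1)) x' *
        LF μ q g ys n m (fun _ => 1) (Function.update x (n - m) x')) μ :=
      intg μ (inner_meas q g ys hq_meas hg_meas x _ _ hm1)
        (C := Cg (n - m) * Cq * B1) (fun x' => by
          rw [abs_mul, abs_mul]
          exact mul_le_mul (mul_le_mul (hCg _ _) (hCq _ _) (abs_nonneg _) hCg0)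
            (hB1 _) (abs_nonneg _) (by positivity))
    have key : |LF μ q g ys n (m + 1) f x| ≤
        ∫ x', Cf * (g x' (ys (n - m)) * q (x (n - m - 1)) x' *
          LF μ q g ys n m (fun _ => 1) (Function.update x (n - m) x')) ∂μ := by
      refine abs_integral_le_of_le μ hint1 (hint2.const_mul Cf) fun x' => ?_
      rw [abs_mul, abs_mul, abs_of_nonneg (hg_nonneg _ _), abs_of_nonneg (hq_nonneg _ _)]
      calc g x' (ys (n - m)) * q (x (n - m - 1)) x' * |LF μ q g ys n m f (Function.update x (n - m) x')|
          ≤ g x' (ys (n - m)) * q (x (n - m - 1)) x' *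
            (Cf * LF μ q g ys n m (fun _ => 1) (Function.update x (n - m) x')) :=
            mul_le_mul_of_nonneg_left (ih _) (mul_nonneg (hg_nonneg _ _) (hq_nonneg _ _))
        _ = _ := by ring
    calc |LF μ q g ys n (m + 1) f x| ≤ _ := key
      _ = Cf * LF μ q g ys n (m + 1) (fun _ => 1) x := by
          rw [integral_const_mul _ _]; rfl

include hq_meas hq_nonneg hg_meas hg_nonneg hCq hCg in
lemma LF_one_pos (σm : ℝ) (hσm : 0 < σm) (hq_low : ∀ a b, σm ≤ q a b)
    (hg_pos : ∀ yv, 0 < ∫ u, g u yv ∂μ) (m : ℕ) :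
    ∃ c > 0, ∀ x, c ≤ LF μ q g ys n m (fun _ => 1) x := by
  induction m with
  | zero => exact ⟨1, one_pos, fun x => le_refl _⟩
  | succ m ih =>
    obtain ⟨c, hc, hlow⟩ := ih
    obtain ⟨hm1, B1, hB1⟩ := LF_meas_bdd μ q g ys n Cq Cg hq_meas hCq hg_meas hCg m
      (fun _ => 1) measurable_const 1 (fun _ => by norm_num)
    refine ⟨σm * c * ∫ u, g u (ys (n - m)) ∂μ, mul_pos (mul_pos hσm hc) (hg_pos _), fun x => ?_⟩
    have u0 : X := Classical.arbitrary X
    have hCg0 : 0 ≤ Cg (n - m) := (abs_nonneg _).trans (hCg (n - m) u0)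
    have hintg : Integrable (fun x' => σm * c * g x' (ys (n - m))) μ :=
      (intg μ (hg_meas _) (C := Cg (n - m)) (fun u => hCg _ _)).const_mul _
    have hCq0 : 0 ≤ Cq := (abs_nonneg _).trans (hCq u0 u0)
    have hint2 : Integrable (fun x' => g x' (ys (n - m)) * q (x (n - m - 1)) x' *
        LF μ q g ys n m (fun _ => 1) (Function.update x (n - m) x')) μ :=
      intg μ (inner_meas q g ys hq_meas hg_meas x _ _ hm1)
        (C := Cg (n - m) * Cq * B1) (fun x' => by
          rw [abs_mul, abs_mul]
          exact mul_le_mul (mul_le_mul (hCg _ _) (hCq _ _) (abs_nonneg _) hCg0)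
            (hB1 _) (abs_nonneg _) (by positivity))
    have hmono : ∫ x', σm * c * g x' (ys (n - m)) ∂μ ≤ LF μ q g ys n (m + 1) (fun _ => 1) x := by
      refine integral_mono hintg hint2 fun x' => ?_
      have h1 : σm * c ≤ q (x (n - m - 1)) x' *
          LF μ q g ys n m (fun _ => 1) (Function.update x (n - m) x') :=
        mul_le_mul (hq_low _ _) (hlow _) hc.le ((hσm.le).trans (hq_low _ _))
      calc σm * c * g x' (ys (n - m)) = g x' (ys (n - m)) * (σm * c) := by ring
        _ ≤ g x' (ys (n - m)) * (q (x (n - m - 1)) x' *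
            LF μ q g ys n m (fun _ => 1) (Function.update x (n - m) x')) :=
            mul_le_mul_of_nonneg_left h1 (hg_nonneg _ _)
        _ = _ := by ring
    calc σm * c * ∫ u, g u (ys (n - m)) ∂μ = ∫ x', σm * c * g x' (ys (n - m)) ∂μ := by
          rw [integral_const_mul _ _]
      _ ≤ _ := hmono

omit [IsProbabilityMeasure μ] [Nonempty X] in
lemma LF_depend (i : ℕ) (f : (ℕ → X) → ℝ)
    (hf : ∀ x x' : ℕ → X, (∀ j, i ≤ j → j ≤ n → x j = x' j) → f x = f x') (m : ℕ) :
    ∀ x xh : ℕ → X, (∀ j, i ≤ j → j ≤ n - m → x j = xh j) → x (n - m) = xh (n - m) →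
      LF μ q g ys n m f x = LF μ q g ys n m f xh := by
  induction m with
  | zero => exact fun x xh h1 _ => hf x xh (fun j hj1 hj2 => h1 j hj1 (by omega))
  | succ m ih =>
    intro x xh h1 h2
    show (∫ x', g x' (ys (n - m)) * q (x (n - m - 1)) x' *
        LF μ q g ys n m f (Function.update x (n - m) x') ∂μ) = _
    have hq : x (n - m - 1) = xh (n - m - 1) := by
      have : n - m - 1 = n - (m + 1) := by omega
      rw [this]; exact h2
    refine integral_congr_ae (.of_forall fun x' => ?_)
    dsimp only
    rw [hq]
    congr 1
    refine ih (Function.update x (n - m) x') (Function.update xh (n - m) x') ?_ ?_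
    · intro j hj1 hj2
      by_cases hj : j = n - m
      · subst hj; simp
      · have hj3 : j ≤ n - (m + 1) := by omega
        rw [Function.update_apply, Function.update_apply, if_neg hj, if_neg hj]
        exact h1 j hj1 hj3
    · simp

end Helpers

lemma dobrushin (μ : Measure X) [IsProbabilityMeasure μ] [Nonempty X]
    (w h α α' : X → ℝ)
    (hw : Measurable w) (hw0 : ∀ u, 0 ≤ w u) (Cw : ℝ) (hCw : ∀ u, w u ≤ Cw)
    (hh : Measurable h) (Ch : ℝ) (hCh : ∀ u, |h u| ≤ Ch)
    (hαm : Measurable α) (hα'm : Measurable α')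
    (σm σp : ℝ) (hσm : 0 < σm)
    (hα1 : ∀ u, σm ≤ α u) (hα2 : ∀ u, α u ≤ σp)
    (hα'1 : ∀ u, σm ≤ α' u) (hα'2 : ∀ u, α' u ≤ σp)
    (hIw : 0 < ∫ u, w u ∂μ)
    (D : ℝ) (hD : ∀ u v, |h u - h v| ≤ D) :
    |(∫ u, α u * w u * h u ∂μ) / (∫ u, α u * w u ∂μ) -
      (∫ u, α' u * w u * h u ∂μ) / (∫ u, α' u * w u ∂μ)| ≤ (1 - σm / σp) * D := by
  obtain ⟨u0⟩ : Nonempty X := inferInstance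
  have hσp : 0 < σp := hσm.trans_le ((hα1 u0).trans (hα2 u0))
  have hCw0 : 0 ≤ Cw := (hw0 u0).trans (hCw u0)
  have hCh0 : 0 ≤ Ch := (abs_nonneg _).trans (hCh u0)
  have hD0 : 0 ≤ D := (abs_nonneg _).trans (hD u0 u0)
  have hρ0 : 0 ≤ 1 - σm / σp := by
    have : σm / σp ≤ 1 := (div_le_one hσp).2 ((hα1 u0).trans (hα2 u0))
    linarith
  -- integrability
  have hw_int : Integrable w μ := intg μ hw (C := Cw) fun u => by
    rw [abs_of_nonneg (hw0 u)]; exact hCw u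
  have habs_αw : ∀ u, |α u * w u| ≤ σp * Cw := fun u => by
    rw [abs_mul, abs_of_nonneg ((hσm.le).trans (hα1 u)), abs_of_nonneg (hw0 u)]
    exact mul_le_mul (hα2 u) (hCw u) (hw0 u) hσp.le
  have habs_α'w : ∀ u, |α' u * w u| ≤ σp * Cw := fun u => by
    rw [abs_mul, abs_of_nonneg ((hσm.le).trans (hα'1 u)), abs_of_nonneg (hw0 u)]
    exact mul_le_mul (hα'2 u) (hCw u) (hw0 u) hσp.le
  have hαw_int : Integrable (fun u => α u * w u) μ := intg μ (hαm.mul hw) habs_αw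
  have hα'w_int : Integrable (fun u => α' u * w u) μ := intg μ (hα'm.mul hw) habs_α'w
  have hαwh_int : Integrable (fun u => α u * w u * h u) μ :=
    intg μ ((hαm.mul hw).mul hh) (C := σp * Cw * Ch) fun u => by
      rw [abs_mul]
      exact mul_le_mul (habs_αw u) (hCh u) (abs_nonneg _) (by positivity)
  have hα'wh_int : Integrable (fun u => α' u * w u * h u) μ :=
    intg μ ((hα'm.mul hw).mul hh) (C := σp * Cw * Ch) fun u => by
      rw [abs_mul]
      exact mul_le_mul (habs_α'w u) (hCh u) (abs_nonneg _) (by positivity)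
  have hwh_int : Integrable (fun u => w u * h u) μ :=
    intg μ (hw.mul hh) (C := Cw * Ch) fun u => by
      rw [abs_mul, abs_of_nonneg (hw0 u)]
      exact mul_le_mul (hCw u) (hCh u) (abs_nonneg _) hCw0
  set Iw := ∫ u, w u ∂μ with hIwdef
  set Iα := ∫ u, α u * w u ∂μ with hIαdef
  set Iα' := ∫ u, α' u * w u ∂μ with hIα'def
  -- bounds on Iα, Iα'
  have hIα_ge : σm * Iw ≤ Iα := by
    have := integral_mono (hw_int.const_mul σm) hαw_int
      (fun u => mul_le_mul_of_nonneg_right (hα1 u) (hw0 u))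
    rwa [integral_const_mul] at this
  have hIα'_ge : σm * Iw ≤ Iα' := by
    have := integral_mono (hw_int.const_mul σm) hα'w_int
      (fun u => mul_le_mul_of_nonneg_right (hα'1 u) (hw0 u))
    rwa [integral_const_mul] at this
  have hIα_pos : 0 < Iα := lt_of_lt_of_le (by positivity) hIα_ge
  have hIα'_pos : 0 < Iα' := lt_of_lt_of_le (by positivity) hIα'_ge
  have hIα_le : Iα ≤ σp * Iw := by
    have := integral_mono hαw_int (hw_int.const_mul σp)
      (fun u => mul_le_mul_of_nonneg_right (hα2 u) (hw0 u))
    rwa [integral_const_mul] at this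
  have hIα'_le : Iα' ≤ σp * Iw := by
    have := integral_mono hα'w_int (hw_int.const_mul σp)
      (fun u => mul_le_mul_of_nonneg_right (hα'2 u) (hw0 u))
    rwa [integral_const_mul] at this
  set W : X → ℝ := fun u => α u * w u / Iα - σm / σp * (w u / Iw) with hWdef
  set W' : X → ℝ := fun u => α' u * w u / Iα' - σm / σp * (w u / Iw) with hW'def
  have hW0 : ∀ u, 0 ≤ W u := by
    intro u
    have key : σm / σp * (w u / Iw) ≤ α u * w u / Iα := by
      rw [show σm / σp * (w u / Iw) = σm * w u / (σp * Iw) by ring,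
        div_le_div_iff₀ (by positivity) hIα_pos]
      have e1 : σm * w u * Iα ≤ σm * w u * (σp * Iw) :=
        mul_le_mul_of_nonneg_left hIα_le (mul_nonneg hσm.le (hw0 u))
      have e2 : σm * w u * (σp * Iw) ≤ α u * w u * (σp * Iw) :=
        mul_le_mul_of_nonneg_right (mul_le_mul_of_nonneg_right (hα1 u) (hw0 u)) (by positivity)
      linarith
    simpa [hWdef] using sub_nonneg.2 key
  have hW'0 : ∀ u, 0 ≤ W' u := by
    intro u
    have key : σm / σp * (w u / Iw) ≤ α' u * w u / Iα' := by
      rw [show σm / σp * (w u / Iw) = σm * w u / (σp * Iw) by ring,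
        div_le_div_iff₀ (by positivity) hIα'_pos]
      have e1 : σm * w u * Iα' ≤ σm * w u * (σp * Iw) :=
        mul_le_mul_of_nonneg_left hIα'_le (mul_nonneg hσm.le (hw0 u))
      have e2 : σm * w u * (σp * Iw) ≤ α' u * w u * (σp * Iw) :=
        mul_le_mul_of_nonneg_right (mul_le_mul_of_nonneg_right (hα'1 u) (hw0 u)) (by positivity)
      linarith
    simpa [hW'def] using sub_nonneg.2 key
  have hWabs : ∀ u, |W u| ≤ σp * Cw / Iα := by
    intro u
    rw [abs_of_nonneg (hW0 u)]
    have h0 : 0 ≤ σm / σp * (w u / Iw) :=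
      mul_nonneg (by positivity) (div_nonneg (hw0 u) hIw.le)
    have h1 : W u ≤ α u * w u / Iα := by simp only [hWdef]; linarith
    have h2 : α u * w u / Iα ≤ σp * Cw / Iα :=
      (div_le_div_iff_of_pos_right hIα_pos).2 ((le_abs_self _).trans (habs_αw u))
    exact h1.trans h2
  have hW'abs : ∀ u, |W' u| ≤ σp * Cw / Iα' := by
    intro u
    rw [abs_of_nonneg (hW'0 u)]
    have h0 : 0 ≤ σm / σp * (w u / Iw) :=
      mul_nonneg (by positivity) (div_nonneg (hw0 u) hIw.le)
    have h1 : W' u ≤ α' u * w u / Iα' := by simp only [hW'def]; linarith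
    have h2 : α' u * w u / Iα' ≤ σp * Cw / Iα' :=
      (div_le_div_iff_of_pos_right hIα'_pos).2 ((le_abs_self _).trans (habs_α'w u))
    exact h1.trans h2
  have hWm : Measurable W := ((hαm.mul hw).div_const Iα).sub ((hw.div_const Iw).const_mul (σm / σp))
  have hW'm : Measurable W' := ((hα'm.mul hw).div_const Iα').sub ((hw.div_const Iw).const_mul (σm / σp))
  have hW_int : Integrable W μ := intg μ hWm hWabs
  have hW'_int : Integrable W' μ := intg μ hW'm hW'abs
  have hWh_int : Integrable (fun u => W u * h u) μ :=
    intg μ (hWm.mul hh) (C := σp * Cw / Iα * Ch) fun u => by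
      rw [abs_mul]
      exact mul_le_mul (hWabs u) (hCh u) (abs_nonneg _) (by positivity)
  have hW'h_int : Integrable (fun u => W' u * h u) μ :=
    intg μ (hW'm.mul hh) (C := σp * Cw / Iα' * Ch) fun u => by
      rw [abs_mul]
      exact mul_le_mul (hW'abs u) (hCh u) (abs_nonneg _) (by positivity)
  have hIwne : Iw ≠ 0 := ne_of_gt hIw
  have hIαne : Iα ≠ 0 := ne_of_gt hIα_pos
  have hIα'ne : Iα' ≠ 0 := ne_of_gt hIα'_pos
  have hIntW : ∫ u, W u ∂μ = 1 - σm / σp := by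
    calc ∫ u, W u ∂μ = ∫ u, (Iα⁻¹ * (α u * w u) - σm / σp * Iw⁻¹ * w u) ∂μ :=
          integral_congr_ae (.of_forall fun u => by simp only [hWdef]; ring)
      _ = Iα⁻¹ * Iα - σm / σp * Iw⁻¹ * Iw := by
          rw [integral_sub (hαw_int.const_mul _) (hw_int.const_mul _),
            integral_const_mul, integral_const_mul]
      _ = 1 - σm / σp := by field_simp
  have hIntW' : ∫ u, W' u ∂μ = 1 - σm / σp := by
    calc ∫ u, W' u ∂μ = ∫ u, (Iα'⁻¹ * (α' u * w u) - σm / σp * Iw⁻¹ * w u) ∂μ :=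
          integral_congr_ae (.of_forall fun u => by simp only [hW'def]; ring)
      _ = Iα'⁻¹ * Iα' - σm / σp * Iw⁻¹ * Iw := by
          rw [integral_sub (hα'w_int.const_mul _) (hw_int.const_mul _),
            integral_const_mul, integral_const_mul]
      _ = 1 - σm / σp := by field_simp
  have hIntWh : ∫ u, W u * h u ∂μ =
      Iα⁻¹ * ∫ u, α u * w u * h u ∂μ - σm / σp * Iw⁻¹ * ∫ u, w u * h u ∂μ := by
    calc ∫ u, W u * h u ∂μ
        = ∫ u, (Iα⁻¹ * (α u * w u * h u) - σm / σp * Iw⁻¹ * (w u * h u)) ∂μ :=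
          integral_congr_ae (.of_forall fun u => by simp only [hWdef]; ring)
      _ = _ := by
          rw [integral_sub (hαwh_int.const_mul _) (hwh_int.const_mul _),
            integral_const_mul, integral_const_mul]
  have hIntW'h : ∫ u, W' u * h u ∂μ =
      Iα'⁻¹ * ∫ u, α' u * w u * h u ∂μ - σm / σp * Iw⁻¹ * ∫ u, w u * h u ∂μ := by
    calc ∫ u, W' u * h u ∂μ
        = ∫ u, (Iα'⁻¹ * (α' u * w u * h u) - σm / σp * Iw⁻¹ * (w u * h u)) ∂μ :=
          integral_congr_ae (.of_forall fun u => by simp only [hW'def]; ring)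
      _ = _ := by
          rw [integral_sub (hα'wh_int.const_mul _) (hwh_int.const_mul _),
            integral_const_mul, integral_const_mul]
  have key : (∫ u, α u * w u * h u ∂μ) / Iα - (∫ u, α' u * w u * h u ∂μ) / Iα' =
      (∫ u, W u * h u ∂μ) - ∫ u, W' u * h u ∂μ := by
    rw [hIntWh, hIntW'h]; ring
  rw [key]
  by_cases hρ : (1 : ℝ) - σm / σp = 0
  · -- both integrals vanish
    have h1 : |∫ u, W u * h u ∂μ| ≤ Ch * ∫ u, W u ∂μ := by
      have := abs_integral_le_of_le μ hWh_int (hW_int.const_mul Ch) fun u => by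
        rw [abs_mul, abs_of_nonneg (hW0 u)]
        calc W u * |h u| ≤ W u * Ch := mul_le_mul_of_nonneg_left (hCh u) (hW0 u)
          _ = Ch * W u := mul_comm _ _
      rwa [integral_const_mul] at this
    have h2 : |∫ u, W' u * h u ∂μ| ≤ Ch * ∫ u, W' u ∂μ := by
      have := abs_integral_le_of_le μ hW'h_int (hW'_int.const_mul Ch) fun u => by
        rw [abs_mul, abs_of_nonneg (hW'0 u)]
        calc W' u * |h u| ≤ W' u * Ch := mul_le_mul_of_nonneg_left (hCh u) (hW'0 u)
          _ = Ch * W' u := mul_comm _ _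
      rwa [integral_const_mul] at this
    rw [hIntW, hρ, mul_zero] at h1
    rw [hIntW', hρ, mul_zero] at h2
    calc |(∫ u, W u * h u ∂μ) - ∫ u, W' u * h u ∂μ|
        ≤ |∫ u, W u * h u ∂μ| + |∫ u, W' u * h u ∂μ| := abs_sub _ _
      _ ≤ 0 := by linarith
      _ ≤ (1 - σm / σp) * D := by positivity
  · have hρpos : 0 < 1 - σm / σp := lt_of_le_of_ne hρ0 (Ne.symm hρ)
    have hspm : (0:ℝ) < σp - σm := by
      have h1 : σm / σp < 1 := by linarith
      have := (div_lt_one hσp).1 h1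
      linarith
    set S : ℝ := ∫ u, W' u * h u ∂μ with hS
    set c : ℝ := S / (1 - σm / σp) with hcdef
    have hc : ∀ u, |h u - c| ≤ D := by
      intro u
      have hint1 : Integrable (fun v => W' v * (h u - h v)) μ :=
        intg μ (hW'm.mul (measurable_const.sub hh)) (C := σp * Cw / Iα' * D) fun v => by
          rw [abs_mul]
          exact mul_le_mul (hW'abs v) (hD u v) (abs_nonneg _) (by positivity)
      have e : h u - c = (∫ v, W' v * (h u - h v) ∂μ) / (1 - σm / σp) := by
        have e1 : (fun v => W' v * (h u - h v)) = fun v => h u * W' v - W' v * h v :=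
          funext fun v => by ring
        rw [e1, integral_sub (hW'_int.const_mul _) hW'h_int, integral_const_mul, hIntW',
          ← hS, hcdef]
        field_simp [hspm.ne']
      rw [e, abs_div, abs_of_pos hρpos, div_le_iff₀ hρpos]
      have hb : |∫ v, W' v * (h u - h v) ∂μ| ≤ D * ∫ v, W' v ∂μ := by
        have := abs_integral_le_of_le μ hint1 (hW'_int.const_mul D) fun v => by
          rw [abs_mul, abs_of_nonneg (hW'0 v)]
          calc W' v * |h u - h v| ≤ W' v * D := mul_le_mul_of_nonneg_left (hD u v) (hW'0 v)
            _ = D * W' v := mul_comm _ _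
        rwa [integral_const_mul] at this
      rw [hIntW'] at hb
      linarith
    have hintWc : Integrable (fun u => W u * (h u - c)) μ :=
      intg μ (hWm.mul (hh.sub measurable_const)) (C := σp * Cw / Iα * D) fun u => by
        rw [abs_mul]
        exact mul_le_mul (hWabs u) (hc u) (abs_nonneg _) (by positivity)
    have e2 : ∫ u, W u * (h u - c) ∂μ =
        (∫ u, W u * h u ∂μ) - ∫ u, W' u * h u ∂μ := by
      have e1 : (fun u => W u * (h u - c)) = fun u => W u * h u - c * W u :=
        funext fun u => by ring
      rw [e1, integral_sub hWh_int (hW_int.const_mul c), integral_const_mul, hIntW, hcdef]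
      rw [← hS]
      field_simp [hspm.ne']
    rw [← e2]
    have hb : |∫ u, W u * (h u - c) ∂μ| ≤ D * ∫ u, W u ∂μ := by
      have := abs_integral_le_of_le μ hintWc (hW_int.const_mul D) fun u => by
        rw [abs_mul, abs_of_nonneg (hW0 u)]
        calc W u * |h u - c| ≤ W u * D := mul_le_mul_of_nonneg_left (hc u) (hW0 u)
          _ = D * W u := mul_comm _ _
      rwa [integral_const_mul] at this
    rw [hIntW] at hb
    linarith


lemma main_osc (μ : Measure X) [IsProbabilityMeasure μ] [Nonempty X]
    (q : X → X → ℝ) (g : X → Y → ℝ) (ys : ℕ → Y) (n : ℕ)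
    (σm σp : ℝ) (hσm : 0 < σm)
    (hq_meas : Measurable (Function.uncurry q))
    (hq_low : ∀ a b, σm ≤ q a b) (hq_up : ∀ a b, q a b ≤ σp)
    (hg_meas : ∀ yv, Measurable fun x => g x yv)
    (hg_nonneg : ∀ x yv, 0 ≤ g x yv)
    (hg_bdd : ∀ yv, ∃ C, ∀ x, g x yv ≤ C)
    (hg_pos : ∀ yv, 0 < ∫ x, g x yv ∂μ)
    (i : ℕ) (hin : i ≤ n)
    (f : (ℕ → X) → ℝ) (hf_meas : Measurable f)
    (Cf : ℝ) (hCf : ∀ x, |f x| ≤ Cf)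
    (hf_dep : ∀ x x' : ℕ → X, (∀ j, i ≤ j → j ≤ n → x j = x' j) → f x = f x') :
    ∀ t k, k ≤ n → i - k ≤ t → ∀ x xh : ℕ → X,
      |LF μ q g ys n (n - k) f x / LF μ q g ys n (n - k) (fun _ => 1) x -
        LF μ q g ys n (n - k) f xh / LF μ q g ys n (n - k) (fun _ => 1) xh| ≤
      2 * (1 - σm / σp) ^ (i - k) * Cf := by
  have hq_nonneg : ∀ a b, 0 ≤ q a b := fun a b => hσm.le.trans (hq_low a b)
  have hCq : ∀ a b, |q a b| ≤ σp := fun a b => by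
    rw [abs_of_nonneg (hq_nonneg a b)]; exact hq_up a b
  set Cg : ℕ → ℝ := fun j => Classical.choose (hg_bdd (ys j)) with hCgdef
  have hCg : ∀ j u, |g u (ys j)| ≤ Cg j := fun j u => by
    rw [abs_of_nonneg (hg_nonneg u _)]
    exact Classical.choose_spec (hg_bdd (ys j)) u
  -- uniform bound on normalized quantities
  have base : ∀ m, ∀ x : ℕ → X,
      |LF μ q g ys n m f x / LF μ q g ys n m (fun _ => 1) x| ≤ Cf := by
    intro m x
    obtain ⟨c, hc, hlow⟩ := LF_one_pos μ q g ys n σp Cg hq_meas hq_nonneg hCq hg_meas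
      hg_nonneg hCg σm hσm hq_low hg_pos m
    have habs := LF_abs_le μ q g ys n σp Cg hq_meas hq_nonneg hCq hg_meas hg_nonneg hCg
      m f hf_meas Cf hCf x
    have hpos : 0 < LF μ q g ys n m (fun _ => 1) x := lt_of_lt_of_le hc (hlow x)
    rw [abs_div, abs_of_pos hpos, div_le_iff₀ hpos]
    exact habs
  have base2 : ∀ k, i ≤ k → ∀ x xh : ℕ → X,
      |LF μ q g ys n (n - k) f x / LF μ q g ys n (n - k) (fun _ => 1) x -
        LF μ q g ys n (n - k) f xh / LF μ q g ys n (n - k) (fun _ => 1) xh| ≤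
      2 * (1 - σm / σp) ^ (i - k) * Cf := by
    intro k hik x xh
    have h0 : i - k = 0 := by omega
    rw [h0, pow_zero]
    calc |LF μ q g ys n (n - k) f x / LF μ q g ys n (n - k) (fun _ => 1) x -
        LF μ q g ys n (n - k) f xh / LF μ q g ys n (n - k) (fun _ => 1) xh|
        ≤ |LF μ q g ys n (n - k) f x / LF μ q g ys n (n - k) (fun _ => 1) x| +
          |LF μ q g ys n (n - k) f xh / LF μ q g ys n (n - k) (fun _ => 1) xh| := abs_sub _ _
      _ ≤ Cf + Cf := add_le_add (base _ x) (base _ xh)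
      _ = 2 * 1 * Cf := by ring
  intro t
  induction t with
  | zero =>
    intro k hk h0 x xh
    exact base2 k (by omega) x xh
  | succ t ih =>
    intro k hk h1 x xh
    by_cases hik : i ≤ k
    · exact base2 k hik x xh
    push_neg at hik
    -- k < i ≤ n, contraction step
    have hk1 : k + 1 ≤ n := by omega
    set m : ℕ := n - (k + 1) with hm
    have hnk : n - k = m + 1 := by omega
    have e2 : n - m = k + 1 := by omega
    have e3 : n - m - 1 = k := by omega
    obtain ⟨hm1, B1, hB1⟩ := LF_meas_bdd μ q g ys n σp Cg hq_meas hCq hg_meas hCg m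
      (fun _ => 1) measurable_const 1 (fun _ => by norm_num)
    obtain ⟨hmf, B, hB⟩ := LF_meas_bdd μ q g ys n σp Cg hq_meas hCq hg_meas hCg m
      f hf_meas Cf hCf
    obtain ⟨c, hc, hlow⟩ := LF_one_pos μ q g ys n σp Cg hq_meas hq_nonneg hCq hg_meas
      hg_nonneg hCg σm hσm hq_low hg_pos m
    have hT1nn : ∀ z : ℕ → X, 0 ≤ LF μ q g ys n m (fun _ => 1) z :=
      LF_nonneg μ q g ys n hq_nonneg hg_nonneg m (fun _ => 1) (fun _ => zero_le_one)
    set w : X → ℝ := fun u =>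
      g u (ys (k + 1)) * LF μ q g ys n m (fun _ => 1) (Function.update x (k + 1) u) with hwdef
    set h : X → ℝ := fun u =>
      LF μ q g ys n m f (Function.update x (k + 1) u) /
        LF μ q g ys n m (fun _ => 1) (Function.update x (k + 1) u) with hhdef
    set α : X → ℝ := fun u => q (x k) u with hαdef
    set α' : X → ℝ := fun u => q (xh k) u with hα'def
    -- dependence: the inner factors do not depend on the frozen path
    have dep1 : ∀ u, LF μ q g ys n m (fun _ => 1) (Function.update xh (k + 1) u) =
        LF μ q g ys n m (fun _ => 1) (Function.update x (k + 1) u) := by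
      intro u
      refine LF_depend μ q g ys n (n + 1) (fun _ => 1) (fun _ _ _ => rfl) m _ _ ?_ ?_
      · intro j hj1 hj2; exfalso; omega
      · rw [e2]; simp
    have depf : ∀ u, LF μ q g ys n m f (Function.update xh (k + 1) u) =
        LF μ q g ys n m f (Function.update x (k + 1) u) := by
      intro u
      refine LF_depend μ q g ys n i f hf_dep m _ _ ?_ ?_
      · intro j hj1 hj2
        rw [e2] at hj2
        have hj : j = k + 1 := by omega
        subst hj; simp
      · rw [e2]; simp
    -- representations of the four quantities as weighted integrals
    have hT1pos : ∀ u : X, 0 < LF μ q g ys n m (fun _ => 1) (Function.update x (k + 1) u) :=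
      fun u => lt_of_lt_of_le hc (hlow _)
    have hreprf : LF μ q g ys n (n - k) f x = ∫ u, α u * w u * h u ∂μ := by
      rw [hnk]
      show (∫ u, g u (ys (n - m)) * q (x (n - m - 1)) u *
        LF μ q g ys n m f (Function.update x (n - m) u) ∂μ) = _
      rw [e3, e2]
      refine integral_congr_ae (.of_forall fun u => ?_)
      simp only [hwdef, hhdef, hαdef]
      field_simp [(hT1pos u).ne']
    have hrepr1 : LF μ q g ys n (n - k) (fun _ => 1) x = ∫ u, α u * w u ∂μ := by
      rw [hnk]
      show (∫ u, g u (ys (n - m)) * q (x (n - m - 1)) u *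
        LF μ q g ys n m (fun _ => 1) (Function.update x (n - m) u) ∂μ) = _
      rw [e3, e2]
      refine integral_congr_ae (.of_forall fun u => ?_)
      simp only [hwdef, hαdef]
      ring
    have hreprf' : LF μ q g ys n (n - k) f xh = ∫ u, α' u * w u * h u ∂μ := by
      rw [hnk]
      show (∫ u, g u (ys (n - m)) * q (xh (n - m - 1)) u *
        LF μ q g ys n m f (Function.update xh (n - m) u) ∂μ) = _
      rw [e3, e2]
      refine integral_congr_ae (.of_forall fun u => ?_)
      simp only [hwdef, hhdef, hα'def]
      rw [depf u]
      field_simp [(hT1pos u).ne']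
    have hrepr1' : LF μ q g ys n (n - k) (fun _ => 1) xh = ∫ u, α' u * w u ∂μ := by
      rw [hnk]
      show (∫ u, g u (ys (n - m)) * q (xh (n - m - 1)) u *
        LF μ q g ys n m (fun _ => 1) (Function.update xh (n - m) u) ∂μ) = _
      rw [e3, e2]
      refine integral_congr_ae (.of_forall fun u => ?_)
      simp only [hwdef, hα'def]
      rw [dep1 u]
      ring
    -- data for the contraction lemma
    have hwm : Measurable w := (hg_meas _).mul (hm1.comp (measurable_update x))
    have hhm : Measurable h := (hmf.comp (measurable_update x)).div (hm1.comp (measurable_update x))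
    have hw0 : ∀ u, 0 ≤ w u := fun u => mul_nonneg (hg_nonneg _ _) (hT1nn _)
    have hCg0 : ∀ j, 0 ≤ Cg j := fun j => (abs_nonneg _).trans (hCg j (x 0))
    have hCw : ∀ u, w u ≤ Cg (k + 1) * B1 := fun u =>
      mul_le_mul ((le_abs_self _).trans (hCg _ u)) ((le_abs_self _).trans (hB1 _))
        (hT1nn _) (hCg0 _)
    have hCh : ∀ u, |h u| ≤ Cf := fun u => base m (Function.update x (k + 1) u)
    have hαm : Measurable α := hq_meas.of_uncurry_left
    have hα'm : Measurable α' := hq_meas.of_uncurry_left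
    have hIw : 0 < ∫ u, w u ∂μ := by
      have hlowg : ∀ u, c * g u (ys (k + 1)) ≤ w u := by
        intro u
        simp only [hwdef]
        calc c * g u (ys (k + 1)) = g u (ys (k + 1)) * c := mul_comm _ _
          _ ≤ g u (ys (k + 1)) * LF μ q g ys n m (fun _ => 1) (Function.update x (k + 1) u) :=
            mul_le_mul_of_nonneg_left (hlow _) (hg_nonneg _ _)
      have hint_w : Integrable w μ := intg μ hwm (C := Cg (k + 1) * B1) fun u => by
        rw [abs_of_nonneg (hw0 u)]; exact hCw u
      have hint_cg : Integrable (fun u => c * g u (ys (k + 1))) μ :=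
        (intg μ (hg_meas _) (C := Cg (k + 1)) fun u => hCg _ _).const_mul c
      calc (0:ℝ) < c * ∫ u, g u (ys (k + 1)) ∂μ := mul_pos hc (hg_pos _)
        _ = ∫ u, c * g u (ys (k + 1)) ∂μ := (integral_const_mul _ _).symm
        _ ≤ ∫ u, w u ∂μ := integral_mono hint_cg hint_w hlowg
    have hD : ∀ u v, |h u - h v| ≤ 2 * (1 - σm / σp) ^ (i - (k + 1)) * Cf := by
      intro u v
      have := ih (k + 1) hk1 (by omega) (Function.update x (k + 1) u)
        (Function.update x (k + 1) v)
      rw [← hm] at this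
      exact this
    have hdob := dobrushin μ w h α α' hwm hw0 (Cg (k + 1) * B1) hCw hhm Cf hCh hαm hα'm
      σm σp hσm (fun u => hq_low _ _) (fun u => hq_up _ _) (fun u => hq_low _ _)
      (fun u => hq_up _ _) hIw (2 * (1 - σm / σp) ^ (i - (k + 1)) * Cf) hD
    rw [hreprf, hrepr1, hreprf', hrepr1']
    calc |(∫ u, α u * w u * h u ∂μ) / (∫ u, α u * w u ∂μ) -
        (∫ u, α' u * w u * h u ∂μ) / (∫ u, α' u * w u ∂μ)|
        ≤ (1 - σm / σp) * (2 * (1 - σm / σp) ^ (i - (k + 1)) * Cf) := hdob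
      _ = 2 * (1 - σm / σp) ^ (i - k) * Cf := by
          rw [show i - k = (i - (k + 1)) + 1 from by omega, pow_succ]
          ring

/-- **Lemma A.3.** Assume (A1). If `f` is bounded (by `Cf`) measurable and
depends only on the coordinates `i, …, n`, then for every `0 ≤ k ≤ n` and every
reference point `x̂_{0:k}`, `|Ψ_{k,n}[f](x_{0:k})| ≤ 2 ρ^{max(i−k,0)} ‖f‖_∞`
(`ρ = 1 − σ₋/σ₊`; natural subtraction `i - k` realizes `max(i−k,0)`). -/
theorem psi_sup_bound
    (μ : Measure X) [IsProbabilityMeasure μ]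
    (q : X → X → ℝ) (g : X → Y → ℝ) (ys : ℕ → Y) (n : ℕ)
    (σm σp : ℝ)
    (hσm : 0 < σm)
    (hq_meas : Measurable (Function.uncurry q))
    (hq_low : ∀ a b, σm ≤ q a b) (hq_up : ∀ a b, q a b ≤ σp)
    (hg_meas : ∀ yv, Measurable fun x => g x yv)
    (hg_nonneg : ∀ x yv, 0 ≤ g x yv)
    (hg_bdd : ∀ yv, ∃ C, ∀ x, g x yv ≤ C)
    (hg_pos : ∀ yv, 0 < ∫ x, g x yv ∂μ)
    (i : ℕ) (hin : i ≤ n)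
    (f : (ℕ → X) → ℝ) (hf_meas : Measurable f)
    (Cf : ℝ) (hCf : ∀ x, |f x| ≤ Cf)
    (hf_dep : ∀ x x' : ℕ → X, (∀ j, i ≤ j → j ≤ n → x j = x' j) → f x = f x')
    (k : ℕ) (hkn : k ≤ n) (xhat : ℕ → X) :
    ∀ x : ℕ → X, |Psi μ q g ys n k xhat f x| ≤ 2 * (1 - σm / σp) ^ (i - k) * Cf := by
  intro x
  haveI : Nonempty X := ⟨x 0⟩
  have h := main_osc μ q g ys n σm σp hσm hq_meas hq_low hq_up hg_meas hg_nonneg hg_bdd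
    hg_pos i hin f hf_meas Cf hCf hf_dep i k hkn (by omega) x xhat
  simpa only [Psi] using h


end
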